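/- If σ_{φ,𝔴} : F^Γ → F^Γ is finite fibre, then ent_set(σ_{φ,𝔴}) = ent_set(σ_φ), i.e. 𝗈(σ_{φ,𝔴}) = 𝗈(σ_φ). -/

import Mathlib

open Function Set

/-- The weighted generalized shift `σ_{φ,𝔴} : F^Γ → F^Γ`,
`σ_{φ,𝔴}((x_α)_α) = (𝔴_α x_{φ(α)})_α`. The unweighted shift `σ_φ` is `wshift φ 1`. -/
def wshift {F : Type*} [Field F] {Γ : Type*} (φ : Γ → Γ) (w : Γ → F) :
    (Γ → F) → (Γ → F) :=
  fun x α => w α * x (φ α)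
/-- `f` is finite fibre if every fibre `f⁻¹(y)` is finite. -/
def FiniteFibre {A : Type*} (f : A → A) : Prop := ∀ y : A, (f ⁻¹' {y}).Finite
/-- An `f`-orbit: a sequence with `f (a n) = a (n+1)` for all `n`. -/
def IsOrbit {A : Type*} (f : A → A) (a : ℕ → A) : Prop := ∀ n : ℕ, f (a n) = a (n + 1)

/-- There exist `m` injective `f`-orbits with pairwise disjoint ranges. -/
def HasDisjointOrbits {A : Type*} (f : A → A) (m : ℕ) : Prop :=
  ∃ a : Fin m → ℕ → A, (∀ i, IsOrbit f (a i) ∧ Function.Injective (a i)) ∧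
    ∀ i j, i ≠ j → Disjoint (Set.range (a i)) (Set.range (a j))

/-- The infinite orbit number `𝗈(f) ∈ ℕ ∪ {+∞}`. -/
noncomputable def orbitNumber {A : Type*} (f : A → A) : ℕ∞ :=
  sSup ({0} ∪ {m : ℕ∞ | ∃ k : ℕ, m = (k : ℕ∞) ∧ 1 ≤ k ∧ HasDisjointOrbits f k})

/-- Covariant set-theoretical entropy: `ent_set f = 𝗈(f)`. -/
noncomputable def entSet {A : Type*} (f : A → A) : ℕ∞ := orbitNumber f

set_option linter.unusedSectionVars false

section Basic

variable {F : Type*} [Field F] {Γ : Type*} (φ : Γ → Γ) (w : Γ → F)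

/-- weight product -/
def cw (n : ℕ) (α : Γ) : F := ∏ i ∈ Finset.range n, w (φ^[i] α)

lemma wshift_iterate_apply (n : ℕ) (x : Γ → F) (α : Γ) :
    (wshift φ w)^[n] x α = cw φ w n α * x (φ^[n] α) := by
  induction n generalizing x with
  | zero => simp [cw]
  | succ n ih =>
    rw [Function.iterate_succ_apply, ih, Function.iterate_succ_apply']
    simp only [cw, Finset.prod_range_succ, wshift, Function.iterate_succ_apply']
    ring

lemma wshift_iterate_add (n : ℕ) (x y : Γ → F) :
    (wshift φ w)^[n] (x + y) = (wshift φ w)^[n] x + (wshift φ w)^[n] y := by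
  funext α
  simp [wshift_iterate_apply, Pi.add_apply, mul_add]

lemma wshift_iterate_sub (n : ℕ) (x y : Γ → F) :
    (wshift φ w)^[n] (x - y) = (wshift φ w)^[n] x - (wshift φ w)^[n] y := by
  funext α
  simp [wshift_iterate_apply, Pi.sub_apply, mul_sub]

/-- eventual periodicity propagation, for arbitrary self-maps -/
lemma ep_mono {A : Type*} (f : A → A) (a p : ℕ) (y : A) (h : f^[a + p] y = f^[a] y) :
    ∀ s t : ℕ, f^[a + s + t * p] y = f^[a + s] y := by
  have h1 : ∀ s, f^[a + s + p] y = f^[a + s] y := by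
    intro s
    have : a + s + p = s + (a + p) := by ring
    rw [this, Function.iterate_add_apply, h, ← Function.iterate_add_apply]
    congr 1; ring
  intro s t
  induction t with
  | zero => simp
  | succ t ih =>
    have : a + s + (t + 1) * p = (a + (s + t * p)) + p := by ring
    rw [this]
    have h2 := h1 (s + t * p)
    rw [show a + (s + t * p) + p = a + (s + t*p) + p by ring] at *
    rw [h2]
    have : a + (s + t * p) = a + s + t * p := by ring
    rw [this, ih]

end Basic

section QP

variable {F : Type*} [Field F] [Fintype F] {Γ : Type*} (φ : Γ → Γ) (w : Γ → F)

/-- iterate congruence beyond the pre-period -/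
lemma phi_ep (m k : ℕ) (h : φ^[m + k] = φ^[m]) :
    ∀ s t : ℕ, φ^[m + s + t * k] = φ^[m + s] := by
  intro s t
  funext α
  exact ep_mono φ m k α (congrFun h α) s t

/-- If `φ` is quasi-periodic then so is the weighted shift. -/
lemma qp_of_phi_qp (m k : ℕ) (hk : 1 ≤ k) (h : φ^[m + k] = φ^[m]) :
    ∃ M P : ℕ, 1 ≤ P ∧ (wshift φ w)^[M + P] = (wshift φ w)^[M] := by
  classical
  set q := Fintype.card F with hq
  have hq2 : 2 ≤ q := Fintype.one_lt_card
  refine ⟨m + k, k * (q - 1), Nat.one_le_iff_ne_zero.mpr (by simp [Nat.mul_eq_zero]; omega), ?_⟩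
  have hphi : ∀ s t : ℕ, φ^[m + s + t * k] = φ^[m + s] := phi_ep φ m k h
  funext x α
  have hiter : φ^[m + k + k * (q - 1)] = φ^[m + k] := by
    have := hphi k (q - 1)
    rwa [show m + k + (q-1) * k = m + k + k * (q-1) by ring] at this
  rw [wshift_iterate_apply, wshift_iterate_apply, hiter]
  congr 1
  -- show cw (m+k+k*(q-1)) α = cw (m+k) α
  by_cases hc : cw φ w (m + k) α = 0
  · rw [hc]
    simp only [cw] at hc ⊢
    rw [Finset.prod_range_add]
    rw [show (∏ i ∈ Finset.range (m+k), w (φ^[i] α)) = 0 from hc, zero_mul]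
  · have hblock : ∀ i < k, φ^[m + k + i] = φ^[m + i] := by
      intro i _
      have := hphi i 1
      rw [one_mul] at this
      rw [show m + k + i = m + i + k by ring, this]
    -- each k-block of the extra product equals Pk
    set Pk : F := ∏ i ∈ Finset.range k, w (φ^[m + k + i] α) with hPk
    have hPkne : Pk ≠ 0 := by
      intro h0
      apply hc
      obtain ⟨i, hi, hwi⟩ := Finset.prod_eq_zero_iff.mp h0
      simp only [Finset.mem_range] at hi
      refine Finset.prod_eq_zero (i := m + i) (by simp [Finset.mem_range]; omega) ?_
      rw [← congrFun (hblock i hi) α]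
      exact hwi
    have hblocks : ∀ t : ℕ, (∏ i ∈ Finset.range (t * k), w (φ^[m + k + i] α)) = Pk ^ t := by
      intro t
      induction t with
      | zero => simp
      | succ t ih =>
        rw [show (t+1) * k = t * k + k by ring, Finset.prod_range_add, ih, pow_succ]
        congr 1
        apply Finset.prod_congr rfl
        intro i hi
        simp only [Finset.mem_range] at hi
        congr 1
        have h1 : φ^[m + (k + i) + t * k] = φ^[m + (k + i)] := hphi (k + i) t
        calc φ^[m + k + (t * k + i)] α = φ^[m + (k + i) + t * k] α := by
              congr 1; omega
          _ = φ^[m + (k + i)] α := congrFun h1 α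
          _ = φ^[m + k + i] α := by congr 1; omega
    simp only [cw]
    rw [Finset.prod_range_add]
    have := hblocks (q - 1)
    rw [show (q - 1) * k = k * (q-1) by ring] at this
    rw [this, FiniteField.pow_card_sub_one_eq_one Pk hPkne, mul_one]

end QP

section Transfer

variable {F : Type*} [Field F] [Fintype F] {Γ : Type*} (φ : Γ → Γ) (w : Γ → F)

/-- If the weighted shift is finite fibre, the set of points with no weighted preimage is finite. -/
lemma K_finite (hff : FiniteFibre (wshift φ w)) :
    {β : Γ | ¬ ∃ δ, w δ ≠ 0 ∧ φ δ = β}.Finite := by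
  classical
  have h0 := hff 0
  have hsub : (fun β : Γ => (fun γ => if γ = β then (1:F) else 0)) ''
      {β : Γ | ¬ ∃ δ, w δ ≠ 0 ∧ φ δ = β} ⊆ wshift φ w ⁻¹' {0} := by
    rintro x ⟨β, hβ, rfl⟩
    simp only [Set.mem_preimage, Set.mem_singleton_iff]
    funext α
    simp only [wshift, Pi.zero_apply]
    by_cases hw : w α = 0
    · simp [hw]
    · have : φ α ≠ β := fun hc => hβ ⟨α, hw, hc⟩
      simp [this]
  have himg := h0.subset hsub
  refine Set.Finite.of_finite_image himg ?_
  intro a _ b _ hab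
  by_contra hne
  have := congrFun hab a
  simp only [if_pos rfl, if_neg hne, eq_self_iff_true, if_true] at this
  exact one_ne_zero this

/-- quasi-periodicity of the weighted shift transfers back to `φ`, given finite fibre data. -/
lemma phi_qp_of_qp (hK : {β : Γ | ¬ ∃ δ, w δ ≠ 0 ∧ φ δ = β}.Finite)
    (M P : ℕ) (hP : 1 ≤ P) (hQP : (wshift φ w)^[M + P] = (wshift φ w)^[M]) :
    ∃ m k : ℕ, 1 ≤ k ∧ φ^[m + k] = φ^[m] := by
  classical
  -- Step A
  have hreach : ∀ β α : Γ, (∀ i < M, w (φ^[i] α) ≠ 0) → φ^[M] α = β → φ^[P] β = β := by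
    intro β α hW hM
    set x : Γ → F := fun γ => if γ = β then (1:F) else 0 with hx
    have h1 : (wshift φ w)^[M + P] x α = (wshift φ w)^[M] x α := by rw [hQP]
    rw [wshift_iterate_apply, wshift_iterate_apply] at h1
    have hcM : cw φ w M α ≠ 0 := by
      rw [cw, Finset.prod_ne_zero_iff]
      intro i hi
      exact hW i (Finset.mem_range.mp hi)
    have hrhs : cw φ w M α * x (φ^[M] α) ≠ 0 := by
      rw [hM]
      simp only [hx, if_pos rfl, mul_one]
      exact hcM
    rw [← h1] at hrhs
    have hne : x (φ^[M + P] α) ≠ 0 := fun h => hrhs (by rw [h, mul_zero])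
    have heq : φ^[M + P] α = β := by
      by_contra hne2
      simp only [hx, if_neg hne2] at hne
      exact hne rfl
    rw [← hM, ← Function.iterate_add_apply]
    rw [show P + M = M + P by ring, heq]
    exact hM.symm
  -- Step B : the set of β with no weighted backward chain of length M is finite
  set NR : ℕ → Set Γ :=
    fun i => {β : Γ | ¬ ∃ α, (∀ j < i, w (φ^[j] α) ≠ 0) ∧ φ^[i] α = β} with hNR
  have hNR0 : NR 0 = ∅ := by
    ext β; simp only [hNR, Set.mem_setOf_eq, Set.mem_empty_iff_false, iff_false, not_not]
    exact ⟨β, by omega, rfl⟩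
  have hNRstep : ∀ i, NR (i+1) ⊆ {β : Γ | ¬ ∃ δ, w δ ≠ 0 ∧ φ δ = β} ∪ φ '' (NR i) := by
    intro i β hβ
    by_cases hk : ∃ δ, w δ ≠ 0 ∧ φ δ = β
    · obtain ⟨δ, hδw, hδ⟩ := hk
      right
      refine ⟨δ, ?_, hδ⟩
      intro hδNR
      obtain ⟨α, hα1, hα2⟩ := hδNR
      apply hβ
      refine ⟨α, ?_, ?_⟩
      · intro j hj
        rcases Nat.lt_or_ge j i with hji | hji
        · exact hα1 j hji
        · have : j = i := by omega
          subst this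
          rw [hα2]; exact hδw
      · rw [Function.iterate_succ_apply', hα2, hδ]
    · left; exact hk
  have hNRM : (NR M).Finite := by
    clear hreach hQP
    induction M with
    | zero => rw [hNR0]; exact Set.finite_empty
    | succ i ih =>
      exact ((hK.union (ih.image φ)).subset (hNRstep i))
  -- Step C
  set B := hNRM.toFinset with hB
  set b := B.card with hb
  refine ⟨b, P * b.factorial, ?_, ?_⟩
  · have := Nat.factorial_pos b
    exact Nat.one_le_iff_ne_zero.mpr (by positivity)
  funext γ
  by_cases hmem : ∃ t ≤ b, φ^[t] γ ∉ NR M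
  · obtain ⟨t, htb, htNR⟩ := hmem
    simp only [hNR, Set.mem_setOf_eq, not_not] at htNR
    obtain ⟨α, hα1, hα2⟩ := htNR
    have hper : φ^[P] (φ^[t] γ) = φ^[t] γ := hreach (φ^[t] γ) α hα1 hα2
    have hbase : φ^[t + P] γ = φ^[t] γ := by
      rw [show t + P = P + t by ring, Function.iterate_add_apply, hper]
    have := ep_mono φ t P γ hbase (b - t) b.factorial
    rw [show t + (b - t) = b by omega] at this
    rw [show b + P * b.factorial = b + b.factorial * P by ring]
    exact this
  · push_neg at hmem
    have hmaps : ∀ t ∈ Finset.range (b+1), φ^[t] γ ∈ B := by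
      intro t ht
      simp only [hB, Set.Finite.mem_toFinset]
      exact hmem t (by simpa using Nat.lt_succ_iff.mp (Finset.mem_range.mp ht))
    have hcard : B.card < (Finset.range (b+1)).card := by
      simp [hb]
    obtain ⟨t1, ht1, t2, ht2, hne, heq⟩ :=
      Finset.exists_ne_map_eq_of_card_lt_of_maps_to hcard hmaps
    -- wlog t1 < t2
    have key : ∀ u1 u2 : ℕ, u1 < u2 → u2 ≤ b → φ^[u1] γ = φ^[u2] γ →
        φ^[b + P * b.factorial] γ = φ^[b] γ := by
      intro u1 u2 hu hub hequ
      set d := u2 - u1 with hd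
      have hd1 : 1 ≤ d := by omega
      have hbase : φ^[u1 + d] γ = φ^[u1] γ := by
        rw [show u1 + d = u2 by omega]; exact hequ.symm
      have hdvd : d ∣ b.factorial := Nat.dvd_factorial hd1 (by omega)
      obtain ⟨e, he⟩ := hdvd
      have := ep_mono φ u1 d γ hbase (b - u1) (P * e)
      rw [show u1 + (b - u1) = b by omega] at this
      rw [show b + P * b.factorial = b + P * e * d by rw [he]; ring]
      exact this
    rcases hne.lt_or_gt with h12 | h21
    · exact key t1 t2 h12 (by simpa using Nat.lt_succ_iff.mp (Finset.mem_range.mp ht2)) heq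
    · exact key t2 t1 h21 (by simpa using Nat.lt_succ_iff.mp (Finset.mem_range.mp ht1)) heq.symm

end Transfer

section Codim

lemma sum_periodic {M : Type*} [AddCommMonoid M] (h : ℕ → M) (p : ℕ)
    (hp : ∀ l, h (l + p) = h l) (c : ℕ) :
    ∑ l ∈ Finset.range (c * p), h l = c • ∑ l ∈ Finset.range p, h l := by
  have hp' : ∀ l k, h (l + k * p) = h l := by
    intro l k
    induction k with
    | zero => simp
    | succ k ih => rw [show l + (k+1)*p = l + k*p + p by ring, hp, ih]
  induction c with
  | zero => simp
  | succ c ih =>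
    rw [show (c+1) * p = c * p + p by ring, Finset.sum_range_add, ih, succ_nsmul]
    congr 1
    apply Finset.sum_congr rfl
    intro l _
    rw [show c * p + l = l + c * p by ring, hp' l c]

variable {F : Type*} [Field F] [Fintype F] {Γ : Type*} (φ : Γ → Γ) (w : Γ → F)

lemma qp_of_finite_codim
    (Hall : ∀ x : Γ → F, ∃ n m : ℕ, n < m ∧ (wshift φ w)^[n] x = (wshift φ w)^[m] x)
    (A : Finset Γ) (n0 m0 : ℕ) (hnm : n0 < m0)
    (hA : ∀ u : Γ → F, (∀ γ ∈ A, u γ = 0) →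
      (wshift φ w)^[m0] u = (wshift φ w)^[n0] u) :
    ∃ M P : ℕ, 1 ≤ P ∧ (wshift φ w)^[M + P] = (wshift φ w)^[M] := by
  classical
  set d0 := m0 - n0 with hd0def
  have hd0 : 1 ≤ d0 := by omega
  set L : (A → F) → (Γ → F) := fun e γ => if h : γ ∈ A then e ⟨γ, h⟩ else 0 with hL
  set G : (A → F) → (Γ → F) :=
    fun e => (wshift φ w)^[m0] (L e) - (wshift φ w)^[n0] (L e) with hG
  have hres : ∀ x : Γ → F,
      (wshift φ w)^[m0] x - (wshift φ w)^[n0] x = G (fun a => x a) := by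
    intro x
    have h1 := hA (x - L (fun a => x a)) (by
      intro γ hγ
      simp [hL, Pi.sub_apply, hγ])
    rw [wshift_iterate_sub, wshift_iterate_sub] at h1
    simp only [hG]
    linear_combination h1
  have hEP : ∀ e : A → F, ∃ a p : ℕ, 1 ≤ p ∧
      (wshift φ w)^[a + p] (G e) = (wshift φ w)^[a] (G e) := by
    intro e
    obtain ⟨n, m, hnm', heq⟩ := Hall (G e)
    exact ⟨n, m - n, by omega, by rw [show n + (m - n) = m by omega]; exact heq.symm⟩
  choose aa pp hp1 hep using hEP
  set As := Finset.univ.sup aa with hAs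
  set Ps := ∏ e : A → F, pp e with hPs
  have hPs1 : 1 ≤ Ps := Finset.one_le_prod' (fun e _ => hp1 e)
  have hz : ∀ e (s t : ℕ), (wshift φ w)^[As + s + t * Ps] (G e)
      = (wshift φ w)^[As + s] (G e) := by
    intro e s t
    obtain ⟨cq, hcq⟩ := Finset.dvd_prod_of_mem pp (Finset.mem_univ e)
    have hle : aa e ≤ As := Finset.le_sup (Finset.mem_univ e)
    have h3 := ep_mono (wshift φ w) (aa e) (pp e) (G e) (hep e) (As - aa e + s) (t * cq)
    rw [show aa e + (As - aa e + s) = As + s by omega] at h3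
    rw [show t * Ps = t * cq * pp e by rw [hPs, hcq]; ring]
    exact h3
  set c := ringChar F with hcdef
  haveI := ringChar.charP F
  have hc1 : c ≠ 0 := CharP.char_ne_zero_of_finite F c
  refine ⟨n0 + As, c * Ps * d0, Nat.mul_pos (Nat.mul_pos (Nat.pos_of_ne_zero hc1) hPs1) hd0, ?_⟩
  funext x
  set e : A → F := fun a => x a with he
  have hgx : (wshift φ w)^[m0] x - (wshift φ w)^[n0] x = G e := hres x
  have hstep : ∀ t : ℕ, (wshift φ w)^[n0 + t + d0] x
      = (wshift φ w)^[n0 + t] x + (wshift φ w)^[t] (G e) := by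
    intro t
    rw [show n0 + t + d0 = t + m0 by omega, Function.iterate_add_apply]
    rw [show n0 + t = t + n0 by ring, Function.iterate_add_apply]
    have h2 : (wshift φ w)^[m0] x = (wshift φ w)^[n0] x + G e := by
      rw [← hgx]; abel
    rw [h2, wshift_iterate_add]
  have hsum : ∀ (j t : ℕ), (wshift φ w)^[n0 + t + j * d0] x
      = (wshift φ w)^[n0 + t] x
        + ∑ l ∈ Finset.range j, (wshift φ w)^[t + l * d0] (G e) := by
    intro j t
    induction j with
    | zero => simp
    | succ j ih =>
      rw [show n0 + t + (j+1) * d0 = n0 + (t + j * d0) + d0 by ring]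
      rw [hstep (t + j * d0)]
      rw [show n0 + (t + j * d0) = n0 + t + j * d0 by ring, ih, Finset.sum_range_succ]
      abel
  have hper : ∀ l, (wshift φ w)^[As + (l + Ps) * d0] (G e)
      = (wshift φ w)^[As + l * d0] (G e) := by
    intro l
    have h4 := hz e (l * d0) d0
    rw [show (l + Ps) * d0 = l * d0 + d0 * Ps by ring]
    rw [show As + (l * d0 + d0 * Ps) = As + l * d0 + d0 * Ps by ring]
    exact h4
  have hzero : ∑ l ∈ Finset.range (c * Ps),
      (wshift φ w)^[As + l * d0] (G e) = 0 := by
    have h5 := sum_periodic (fun l => (wshift φ w)^[As + l * d0] (G e)) Ps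
      (fun l => hper l) c
    rw [h5]
    funext γ
    simp only [Pi.smul_apply, Pi.zero_apply, smul_eq_mul, nsmul_eq_mul]
    rw [show ((c : F)) = 0 from CharP.cast_eq_zero F c, zero_mul]
  have hmain := hsum (c * Ps) As
  rw [hmain, hzero, add_zero]

end Codim

section Dicho

variable {F : Type*} [Field F] [Fintype F] {Γ : Type*} (φ : Γ → Γ) (w : Γ → F)

lemma exists_injective_orbit
    (hnotQP : ¬ ∃ M P : ℕ, 1 ≤ P ∧ (wshift φ w)^[M + P] = (wshift φ w)^[M]) :
    ∃ x : Γ → F, ∀ n m : ℕ, n < m → (wshift φ w)^[n] x ≠ (wshift φ w)^[m] x := by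
  classical
  by_contra hcon
  push_neg at hcon
  -- hcon : ∀ x, ∃ n m, n < m ∧ f^[n] x = f^[m] x
  have Hall : ∀ x : Γ → F, ∃ n m : ℕ, n < m ∧
      (wshift φ w)^[n] x = (wshift φ w)^[m] x := by
    intro x
    obtain ⟨n, m, hnm, heq⟩ := hcon x
    exact ⟨n, m, hnm, heq⟩
  -- extension step
  have ext_step : ∀ (A : Finset Γ) (ρ : Γ → F) (n m : ℕ), n < m →
      ∃ (ρ' : Γ → F) (A' : Finset Γ), A ⊆ A' ∧ (∀ γ ∈ A, ρ' γ = ρ γ) ∧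
        ∀ y : Γ → F, (∀ γ ∈ A', y γ = ρ' γ) →
          (wshift φ w)^[m] y ≠ (wshift φ w)^[n] y := by
    intro A ρ n m hnm
    by_cases hcase : ∃ (u : Γ → F) (α : Γ), (∀ γ ∈ A, u γ = 0) ∧
        (wshift φ w)^[m] (ρ + u) α ≠ (wshift φ w)^[n] (ρ + u) α
    · obtain ⟨u, α, hu0, hune⟩ := hcase
      refine ⟨ρ + u, insert (φ^[m] α) (insert (φ^[n] α) A), ?_, ?_, ?_⟩
      · intro γ hγ
        exact Finset.mem_insert_of_mem (Finset.mem_insert_of_mem hγ)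
      · intro γ hγ
        simp [Pi.add_apply, hu0 γ hγ]
      · intro y hy
        intro heq
        apply hune
        have h1 : y (φ^[m] α) = (ρ + u) (φ^[m] α) :=
          hy _ (Finset.mem_insert_self _ _)
        have h2 : y (φ^[n] α) = (ρ + u) (φ^[n] α) :=
          hy _ (Finset.mem_insert_of_mem (Finset.mem_insert_self _ _))
        have e1 : (wshift φ w)^[m] (ρ + u) α = (wshift φ w)^[m] y α := by
          rw [wshift_iterate_apply, wshift_iterate_apply, h1]
        have e2 : (wshift φ w)^[n] (ρ + u) α = (wshift φ w)^[n] y α := by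
          rw [wshift_iterate_apply, wshift_iterate_apply, h2]
        rw [e1, e2, heq]
    · exfalso
      push_neg at hcase
      apply hnotQP
      refine qp_of_finite_codim φ w Hall A n m hnm ?_
      intro u hu
      have hρeq : (wshift φ w)^[m] ρ = (wshift φ w)^[n] ρ := by
        have := hcase 0
        funext β
        have h := this β (by intro γ _; rfl)
        simpa using h
      have h2 : (wshift φ w)^[m] (ρ + u) = (wshift φ w)^[n] (ρ + u) := by
        funext β
        exact hcase u β (fun γ hγ => hu γ hγ)
      rw [wshift_iterate_add, wshift_iterate_add, hρeq] at h2
      exact add_left_cancel h2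
  -- enumeration of pairs
  set nk : ℕ → ℕ := fun k => (Nat.unpair k).1 with hnk
  set mk : ℕ → ℕ := fun k => (Nat.unpair k).1 + (Nat.unpair k).2 + 1 with hmk
  have hnmk : ∀ k, nk k < mk k := by intro k; simp [hnk, hmk]
  have ext' : ∀ (k : ℕ) (s : (Γ → F) × Finset Γ), ∃ s' : (Γ → F) × Finset Γ,
      s.2 ⊆ s'.2 ∧ (∀ γ ∈ s.2, s'.1 γ = s.1 γ) ∧
      ∀ y : Γ → F, (∀ γ ∈ s'.2, y γ = s'.1 γ) →
        (wshift φ w)^[mk k] y ≠ (wshift φ w)^[nk k] y := by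
    intro k s
    obtain ⟨ρ', A', h1, h2, h3⟩ := ext_step s.2 s.1 (nk k) (mk k) (hnmk k)
    exact ⟨(ρ', A'), h1, h2, h3⟩
  choose next hsub hagr hforce using ext'
  set seq : ℕ → (Γ → F) × Finset Γ :=
    fun k => Nat.rec ((0 : Γ → F), (∅ : Finset Γ)) (fun k ih => next k ih) k with hseq
  have hseqsucc : ∀ k, seq (k + 1) = next k (seq k) := fun k => rfl
  have hmono : ∀ k j, k ≤ j → (seq k).2 ⊆ (seq j).2 := by
    intro k j hkj
    induction j, hkj using Nat.le_induction with
    | base => exact Finset.Subset.refl _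
    | succ j hkj ih =>
      refine ih.trans ?_
      rw [hseqsucc j]
      exact hsub j (seq j)
  have hstab : ∀ k j, k ≤ j → ∀ γ ∈ (seq k).2, (seq j).1 γ = (seq k).1 γ := by
    intro k j hkj
    induction j, hkj using Nat.le_induction with
    | base => intro γ _; rfl
    | succ j hkj ih =>
      intro γ hγ
      rw [hseqsucc j]
      rw [hagr j (seq j) γ (hmono k j hkj hγ)]
      exact ih γ hγ
  set x : Γ → F := fun γ =>
    if h : ∃ k, γ ∈ (seq k).2 then (seq (Nat.find h)).1 γ else 0 with hx
  have hxval : ∀ k, ∀ γ ∈ (seq k).2, x γ = (seq k).1 γ := by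
    intro k γ hγ
    have h : ∃ j, γ ∈ (seq j).2 := ⟨k, hγ⟩
    have hfind : Nat.find h ≤ k := Nat.find_min' h hγ
    have hspec : γ ∈ (seq (Nat.find h)).2 := Nat.find_spec h
    simp only [hx, dif_pos h]
    rw [← hstab (Nat.find h) k hfind γ hspec]
  obtain ⟨n, m, hnm, heq⟩ := Hall x
  set k := Nat.pair n (m - n - 1) with hk
  have hnkk : nk k = n := by simp [hnk, hk]
  have hmkk : mk k = m := by simp [hmk, hk]; omega
  have := hforce k (seq k) x (by
    intro γ hγ
    rw [← hseqsucc k] at hγ ⊢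
    exact hxval (k+1) γ hγ)
  rw [hnkk, hmkk] at this
  exact this heq.symm

end Dicho

section Poly

open Polynomial

variable {F : Type*} [Field F] [Fintype F] {Γ : Type*} (φ : Γ → Γ) (w : Γ → F)

/-- the weighted shift as a linear map -/
def wshiftL : (Γ → F) →ₗ[F] (Γ → F) where
  toFun := wshift φ w
  map_add' x y := by funext α; simp [wshift, mul_add]
  map_smul' c x := by funext α; simp [wshift]; ring

lemma wshiftL_pow_apply (n : ℕ) (x : Γ → F) :
    (wshiftL φ w ^ n) x = (wshift φ w)^[n] x := by
  rw [Module.End.pow_apply]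
  rfl

lemma X_pow_ne (n m : ℕ) (h : n ≠ m) : (X : F[X]) ^ n ≠ X ^ m := by
  intro heq
  have := congrArg (fun p => Polynomial.coeff p n) heq
  simp [coeff_X_pow, h] at this

lemma X_pow_add_one_ne (i : ℕ) : (X : F[X]) ^ (i + 1) + 1 ≠ 0 := by
  intro heq
  have := congrArg (fun p => Polynomial.coeff p 0) heq
  simp [coeff_X_pow, coeff_one, show ¬ (0:ℕ) = i + 1 by omega] at this

lemma X_pow_add_X_pow_inj (a b c d : ℕ) (h1 : a < b) (h2 : c < d)
    (h : (X : F[X]) ^ a + X ^ b = X ^ c + X ^ d) : a = c ∧ b = d := by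
  by_cases hac : a = c
  · subst hac
    have hbd : (X : F[X]) ^ b = X ^ d := by
      have := congrArg (fun p => p - (X : F[X]) ^ a) h
      simpa using this
    refine ⟨rfl, ?_⟩
    by_contra hbdne
    exact X_pow_ne b d hbdne hbd
  · exfalso
    have hca := congrArg (fun p => Polynomial.coeff p a) h
    simp only [coeff_add, coeff_X_pow, if_pos rfl, if_neg (by omega : ¬ a = b)] at hca
    rw [if_neg hac] at hca
    by_cases had : a = d
    · have hcc := congrArg (fun p => Polynomial.coeff p c) h
      simp only [coeff_add, coeff_X_pow, if_pos rfl] at hcc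
      rw [if_neg (by omega : ¬ c = a), if_neg (by omega : ¬ c = d)] at hcc
      by_cases hcb : c = b
      · omega
      · rw [if_neg hcb] at hcc
        simp at hcc
    · rw [if_neg had] at hca
      simp at hca

lemma aeval_ne_zero_of_injective_orbit (x0 : Γ → F)
    (hx : ∀ n m : ℕ, n < m → (wshift φ w)^[n] x0 ≠ (wshift φ w)^[m] x0)
    (g : F[X]) (hg : g ≠ 0) :
    (Polynomial.aeval (wshiftL φ w) g) x0 ≠ 0 := by
  intro h0
  classical
  set g' : F[X] := g * Polynomial.C (g.leadingCoeff)⁻¹ with hg'def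
  have hmonic : g'.Monic := monic_mul_leadingCoeff_inv hg
  have hg'ne : g' ≠ 0 := hmonic.ne_zero
  have hg'0 : (Polynomial.aeval (wshiftL φ w) g') x0 = 0 := by
    have heq : g' = Polynomial.C (g.leadingCoeff)⁻¹ * g := by rw [hg'def]; ring
    rw [heq, map_mul, Module.End.mul_apply, h0, map_zero]
  set d := g'.natDegree with hd
  obtain ⟨a, b, hab, hcoeff⟩ := Finite.exists_ne_map_eq_of_infinite
    (fun t : ℕ => (fun i : Fin d => ((X : F[X]) ^ t %ₘ g').coeff i))
  have hreq : (X : F[X]) ^ a %ₘ g' = (X : F[X]) ^ b %ₘ g' := by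
    ext i
    by_cases hi : i < d
    · exact congrFun hcoeff ⟨i, hi⟩
    · have hle : g'.degree ≤ (i : WithBot ℕ) := by
        rw [degree_eq_natDegree hg'ne]
        exact_mod_cast not_lt.mp hi
      rw [coeff_eq_zero_of_degree_lt (lt_of_lt_of_le (degree_modByMonic_lt _ hmonic) hle),
          coeff_eq_zero_of_degree_lt (lt_of_lt_of_le (degree_modByMonic_lt _ hmonic) hle)]
  have hdvd : (X : F[X]) ^ b - X ^ a
      = g' * ((X : F[X]) ^ b /ₘ g' - (X : F[X]) ^ a /ₘ g') := by
    have hb := modByMonic_add_div ((X : F[X]) ^ b) g'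
    have ha := modByMonic_add_div ((X : F[X]) ^ a) g'
    calc (X : F[X]) ^ b - X ^ a
        = ((X : F[X])^b %ₘ g' + g' * ((X:F[X])^b /ₘ g'))
          - ((X : F[X])^a %ₘ g' + g' * ((X:F[X])^a /ₘ g')) := by rw [hb, ha]
      _ = g' * ((X : F[X]) ^ b /ₘ g' - (X : F[X]) ^ a /ₘ g') := by rw [hreq]; ring
  have hfinal : (Polynomial.aeval (wshiftL φ w)) ((X : F[X]) ^ b - X ^ a) x0 = 0 := by
    rw [hdvd, mul_comm, map_mul, Module.End.mul_apply, hg'0, map_zero]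
  rw [map_sub, aeval_X_pow, aeval_X_pow, LinearMap.sub_apply] at hfinal
  have hba : (wshift φ w)^[b] x0 = (wshift φ w)^[a] x0 := by
    have := sub_eq_zero.mp hfinal
    rw [wshiftL_pow_apply, wshiftL_pow_apply] at this
    exact this
  rcases hab.lt_or_gt with hlt | hlt
  · exact hx a b hlt hba.symm
  · exact hx b a hlt hba

lemma hasDisjointOrbits_of_injective_orbit (x0 : Γ → F)
    (hx : ∀ n m : ℕ, n < m → (wshift φ w)^[n] x0 ≠ (wshift φ w)^[m] x0)
    (k : ℕ) : HasDisjointOrbits (wshift φ w) k := by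
  classical
  have hv : ∀ c t : ℕ, (wshift φ w)^[t] (x0 + (wshift φ w)^[c + 1] x0)
      = (Polynomial.aeval (wshiftL φ w) ((X : F[X]) ^ t * (X ^ (c + 1) + 1))) x0 := by
    intro c t
    rw [map_mul, Module.End.mul_apply, map_add, map_one, aeval_X_pow, aeval_X_pow,
      LinearMap.add_apply, Module.End.one_apply, wshiftL_pow_apply, wshiftL_pow_apply,
      add_comm x0]
  refine ⟨fun i n => (wshift φ w)^[n] (x0 + (wshift φ w)^[(i : ℕ) + 1] x0), ?_, ?_⟩
  · intro i
    constructor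
    · intro n
      exact (Function.iterate_succ_apply' (wshift φ w) n _).symm
    · have key : ∀ n m : ℕ, n < m →
          (wshift φ w)^[n] (x0 + (wshift φ w)^[(i : ℕ) + 1] x0)
          ≠ (wshift φ w)^[m] (x0 + (wshift φ w)^[(i : ℕ) + 1] x0) := by
        intro n m hnm heq
        apply aeval_ne_zero_of_injective_orbit φ w x0 hx
          (((X : F[X]) ^ n - X ^ m) * (X ^ ((i : ℕ) + 1) + 1))
          (mul_ne_zero (sub_ne_zero.mpr (X_pow_ne n m (Nat.ne_of_lt hnm)))
            (X_pow_add_one_ne _))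
        rw [sub_mul, map_sub, LinearMap.sub_apply, ← hv ((i : ℕ)) n, ← hv ((i : ℕ)) m,
          heq, sub_self]
      intro n m hnmeq
      by_contra hne
      rcases Ne.lt_or_gt hne with h | h
      · exact key n m h hnmeq
      · exact key m n h hnmeq.symm
  · intro i j hij
    rw [Set.disjoint_left]
    rintro z ⟨n, rfl⟩ ⟨m, hm⟩
    have hm' : (wshift φ w)^[m] (x0 + (wshift φ w)^[(j : ℕ) + 1] x0)
        = (wshift φ w)^[n] (x0 + (wshift φ w)^[(i : ℕ) + 1] x0) := hm
    have hpz : (Polynomial.aeval (wshiftL φ w)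
        ((X : F[X]) ^ n * (X ^ ((i : ℕ) + 1) + 1)
          - (X : F[X]) ^ m * (X ^ ((j : ℕ) + 1) + 1))) x0 = 0 := by
      rw [map_sub, LinearMap.sub_apply, ← hv ((i : ℕ)) n, ← hv ((j : ℕ)) m, ← hm', sub_self]
    have hp0 : (X : F[X]) ^ n * (X ^ ((i : ℕ) + 1) + 1)
        = (X : F[X]) ^ m * (X ^ ((j : ℕ) + 1) + 1) := by
      by_contra hne
      exact aeval_ne_zero_of_injective_orbit φ w x0 hx _ (sub_ne_zero.mpr hne) hpz
    have hexp : (X : F[X]) ^ n + X ^ (n + ((i : ℕ) + 1))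
        = (X : F[X]) ^ m + X ^ (m + ((j : ℕ) + 1)) := by
      have h1 : (X : F[X]) ^ n * (X ^ ((i : ℕ) + 1) + 1)
          = X ^ n + X ^ (n + ((i : ℕ) + 1)) := by rw [pow_add]; ring
      have h2 : (X : F[X]) ^ m * (X ^ ((j : ℕ) + 1) + 1)
          = X ^ m + X ^ (m + ((j : ℕ) + 1)) := by rw [pow_add]; ring
      rw [← h1, ← h2, hp0]
    obtain ⟨hnm, hij'⟩ := X_pow_add_X_pow_inj n (n + ((i : ℕ) + 1)) m (m + ((j : ℕ) + 1))
      (by omega) (by omega) hexp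
    apply hij
    have : (i : ℕ) = (j : ℕ) := by omega
    exact Fin.ext this

end Poly


section Orb

lemma orbitNumber_eq_zero' {A : Type*} (f : A → A) (M P : ℕ) (hP : 1 ≤ P)
    (h : f^[M + P] = f^[M]) : orbitNumber f = 0 := by
  have hset : {m : ℕ∞ | ∃ k : ℕ, m = (k : ℕ∞) ∧ 1 ≤ k ∧ HasDisjointOrbits f k} = ∅ := by
    ext m
    simp only [Set.mem_setOf_eq, Set.mem_empty_iff_false, iff_false, not_exists]
    rintro k ⟨hmk, hk1, a, ha, hd⟩
    obtain ⟨horb, hinj⟩ := ha ⟨0, hk1⟩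
    have han : ∀ n : ℕ, a ⟨0, hk1⟩ n = f^[n] (a ⟨0, hk1⟩ 0) := by
      intro n
      induction n with
      | zero => rfl
      | succ n ih =>
        rw [← horb n, ih]
        exact (Function.iterate_succ_apply' f n _).symm
    have : a ⟨0, hk1⟩ (M + P) = a ⟨0, hk1⟩ M := by
      rw [han (M + P), han M, congrFun h (a ⟨0, hk1⟩ 0)]
    have := hinj this
    omega
  rw [orbitNumber, hset, Set.union_empty, sSup_singleton]

lemma orbitNumber_eq_top' {A : Type*} (f : A → A)
    (h : ∀ k : ℕ, HasDisjointOrbits f k) : orbitNumber f = ⊤ := by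
  rw [orbitNumber]
  refine sSup_eq_top.mpr ?_
  intro b hb
  lift b to ℕ using hb.ne
  refine ⟨((b + 1 : ℕ) : ℕ∞), Or.inr ⟨b + 1, rfl, by omega, h (b + 1)⟩, ?_⟩
  exact_mod_cast Nat.lt_succ_self b

end Orb


/-- If `σ_{φ,𝔴}` is finite fibre, then `ent_set(σ_{φ,𝔴}) = ent_set(σ_φ)`. -/
theorem stmt_19 {F : Type*} [Field F] [Fintype F] {Γ : Type*} [Nonempty Γ]
    (φ : Γ → Γ) (w : Γ → F)
    (hff : FiniteFibre (wshift φ w)) :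
    entSet (wshift φ w) = entSet (wshift φ (1 : Γ → F)) := by
  classical
  have hK : {β : Γ | ¬ ∃ δ, w δ ≠ 0 ∧ φ δ = β}.Finite := K_finite φ w hff
  have hK1 : {β : Γ | ¬ ∃ δ, (1 : Γ → F) δ ≠ 0 ∧ φ δ = β}.Finite := by
    apply hK.subset
    intro β hβ
    simp only [Set.mem_setOf_eq] at hβ ⊢
    rintro ⟨δ, h1, h2⟩
    exact hβ ⟨δ, by simp, h2⟩
  by_cases hφqp : ∃ m k : ℕ, 1 ≤ k ∧ φ^[m + k] = φ^[m]
  · obtain ⟨m, k, hk, h⟩ := hφqp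
    obtain ⟨M1, P1, hP1, h1⟩ := qp_of_phi_qp φ w m k hk h
    obtain ⟨M2, P2, hP2, h2⟩ := qp_of_phi_qp φ (1 : Γ → F) m k hk h
    rw [entSet, entSet, orbitNumber_eq_zero' _ M1 P1 hP1 h1,
      orbitNumber_eq_zero' _ M2 P2 hP2 h2]
  · have h1 : ¬ ∃ M P : ℕ, 1 ≤ P ∧ (wshift φ w)^[M + P] = (wshift φ w)^[M] := by
      rintro ⟨M, P, hP, h⟩
      exact hφqp (phi_qp_of_qp φ w hK M P hP h)
    have h2 : ¬ ∃ M P : ℕ, 1 ≤ P ∧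
        (wshift φ (1 : Γ → F))^[M + P] = (wshift φ (1 : Γ → F))^[M] := by
      rintro ⟨M, P, hP, h⟩
      exact hφqp (phi_qp_of_qp φ (1 : Γ → F) hK1 M P hP h)
    obtain ⟨x1, hx1⟩ := exists_injective_orbit φ w h1
    obtain ⟨x2, hx2⟩ := exists_injective_orbit φ (1 : Γ → F) h2
    rw [entSet, entSet,
      orbitNumber_eq_top' _ (fun k => hasDisjointOrbits_of_injective_orbit φ w x1 hx1 k),
      orbitNumber_eq_top' _ (fun k => hasDisjointOrbits_of_injective_orbit φ (1 : Γ → F) x2 hx2 k)]
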